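/- arXiv:2511.04232 — 2 statements merged into one kernel-verified Lean document; each statement's English description precedes it below -/
import Mathlib

section
/- Let d ≥ 1, let 0 < μ ≤ G_d, let D̂ be a real d×d diagonal matrix with diagonal entries in [μ, G_d], let α be real with 0 < α ≤ μ/(2·G_d²), set ρ = 1 − α·μ, and for an integer k ≥ 0 define Γ = (I − (I − α·D̂)^{k+1})·D̂^{−1}. Then for every vector v ∈ ℝ^d, ⟨v, Γ·v⟩ ≥ ((1 − ρ^{k+1})/G_d)·‖v‖², and in particular ⟨v, Γ·v⟩ ≥ 0 with the right-hand constant (1 − ρ^{k+1})/G_d strictly positive. -/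
open scoped RealInnerProductSpace

/-- The action of a real `d × d` matrix on `ℝ^d` (Euclidean space). -/
noncomputable def mulV {d : ℕ} (A : Matrix (Fin d) (Fin d) ℝ)
    (v : EuclideanSpace ℝ (Fin d)) : EuclideanSpace ℝ (Fin d) :=
  Matrix.toEuclideanCLM (𝕜 := ℝ) A v

lemma mulV_apply {d : ℕ} (A : Matrix (Fin d) (Fin d) ℝ)
    (v : EuclideanSpace ℝ (Fin d)) (i : Fin d) :
    mulV A v i = A.mulVec v i := by
  have := Matrix.ofLp_toEuclideanCLM (𝕜 := ℝ) A v
  have h2 := congrFun this i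
  simpa [mulV] using h2

/-- **Lemma 4.** The preconditioner `Γ = (I - (I - α·D̂)^{k+1})·D̂⁻¹`
satisfies `⟨v, Γ·v⟩ ≥ ((1 - ρ^{k+1})/G_d)·‖v‖²` for every `v`, with
`(1 - ρ^{k+1})/G_d > 0`, where `ρ = 1 - α·μ`. -/
theorem stmt3 (d : ℕ) (hd : 1 ≤ d) (μ Gd : ℝ) (hμ : 0 < μ) (hμG : μ ≤ Gd)
    (Dh : Matrix (Fin d) (Fin d) ℝ) (hDdiag : Dh.IsDiag)
    (hDbound : ∀ i, Dh i i ∈ Set.Icc μ Gd)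
    (α : ℝ) (hα : 0 < α) (hα2 : α ≤ μ / (2 * Gd ^ 2))
    (ρ : ℝ) (hρ : ρ = 1 - α * μ)
    (k : ℕ) (Γ : Matrix (Fin d) (Fin d) ℝ)
    (hΓ : Γ = (1 - (1 - α • Dh) ^ (k + 1)) * Dh⁻¹) :
    0 < (1 - ρ ^ (k + 1)) / Gd ∧
    ∀ v : EuclideanSpace ℝ (Fin d),
      ((1 - ρ ^ (k + 1)) / Gd) * ‖v‖ ^ 2 ≤ ⟪v, mulV Γ v⟫ ∧
      0 ≤ ⟪v, mulV Γ v⟫ := by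
  have hGd : 0 < Gd := lt_of_lt_of_le hμ hμG
  -- ρ bounds
  have hαμ : α * μ ≤ 1 / 2 := by
    have h1 : α * μ ≤ μ / (2 * Gd ^ 2) * μ := by
      exact mul_le_mul_of_nonneg_right hα2 hμ.le
    have h2 : μ / (2 * Gd ^ 2) * μ ≤ 1 / 2 := by
      rw [div_mul_eq_mul_div, div_le_div_iff₀ (by positivity) (by norm_num)]
      nlinarith
    linarith
  have hρ0 : 0 ≤ ρ := by rw [hρ]; linarith
  have hρ1 : ρ < 1 := by rw [hρ]; nlinarith
  have hρk : ρ ^ (k + 1) < 1 := pow_lt_one₀ hρ0 hρ1 (Nat.succ_ne_zero k)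
  have hc : 0 < (1 - ρ ^ (k + 1)) / Gd := div_pos (by linarith) hGd
  refine ⟨hc, fun v => ?_⟩
  -- diagonal structure
  set f : Fin d → ℝ := Dh.diag with hf
  have hDh : Dh = Matrix.diagonal f := hDdiag.diagonal_diag.symm
  set γ : Fin d → ℝ := fun i => (1 - (1 - α * f i) ^ (k + 1)) * (f i)⁻¹ with hγ
  have hinv : Dh⁻¹ = Matrix.diagonal (fun i => (f i)⁻¹) := by
    apply Matrix.inv_eq_right_inv
    rw [hDh, Matrix.diagonal_mul_diagonal]
    ext i j
    rcases eq_or_ne i j with rfl | h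
    · simp [mul_inv_cancel₀ (ne_of_gt (lt_of_lt_of_le hμ (hDbound i).1) : f i ≠ 0),
        Matrix.one_apply]
    · simp [Matrix.diagonal_apply_ne _ h, Matrix.one_apply_ne h]
  have hΓd : Γ = Matrix.diagonal γ := by
    rw [hΓ, hinv, hDh, ← Matrix.diagonal_smul, ← Matrix.diagonal_one,
      Matrix.diagonal_sub, Matrix.diagonal_pow, Matrix.diagonal_sub,
      Matrix.diagonal_mul_diagonal]
    congr 1
  -- pointwise bound on γ
  have hγbound : ∀ i, (1 - ρ ^ (k + 1)) / Gd ≤ γ i := by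
    intro i
    obtain ⟨h1, h2⟩ := hDbound i
    have hfd : f i = Dh i i := rfl
    rw [← hfd] at h1 h2
    have ht0 : 0 < f i := lt_of_lt_of_le hμ h1
    have hαt : α * f i ≤ 1 / 2 := by
      have := mul_le_mul_of_nonneg_left h2 hα.le
      have h3 : α * Gd ≤ μ / (2 * Gd ^ 2) * Gd := mul_le_mul_of_nonneg_right hα2 hGd.le
      have h4 : μ / (2 * Gd ^ 2) * Gd ≤ 1 / 2 := by
        rw [div_mul_eq_mul_div, div_le_div_iff₀ (by positivity) (by norm_num)]
        nlinarith
      linarith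
    have hnn : 0 ≤ 1 - α * f i := by linarith
    have hle : 1 - α * f i ≤ ρ := by
      rw [hρ]
      have := mul_le_mul_of_nonneg_left h1 hα.le
      linarith
    have hpow : (1 - α * f i) ^ (k + 1) ≤ ρ ^ (k + 1) :=
      pow_le_pow_left₀ hnn hle (k + 1)
    have : (1 - ρ ^ (k + 1)) / Gd ≤ (1 - (1 - α * f i) ^ (k + 1)) / f i :=
      div_le_div₀ (by linarith) (by linarith) ht0 h2
    simpa [γ, div_eq_mul_inv] using this
  -- inner product computation
  have hinner : ⟪v, mulV Γ v⟫ = ∑ i, γ i * v i ^ 2 := by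
    rw [PiLp.inner_apply]
    refine Finset.sum_congr rfl fun i _ => ?_
    rw [mulV_apply, hΓd, Matrix.mulVec_diagonal]
    simp [RCLike.inner_apply]
    ring
  have hnorm : ‖v‖ ^ 2 = ∑ i, v i ^ 2 := by
    rw [← real_inner_self_eq_norm_sq, PiLp.inner_apply]
    refine Finset.sum_congr rfl fun i _ => ?_
    simp [RCLike.inner_apply, sq]
  have hmain : ((1 - ρ ^ (k + 1)) / Gd) * ‖v‖ ^ 2 ≤ ⟪v, mulV Γ v⟫ := by
    rw [hinner, hnorm, Finset.mul_sum]
    refine Finset.sum_le_sum fun i _ => ?_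
    exact mul_le_mul_of_nonneg_right (hγbound i) (sq_nonneg _)
  refine ⟨hmain, le_trans ?_ hmain⟩
  positivity
end

section
/- Let d ≥ 1, let 0 < μ ≤ G_d, let β₁ ∈ [0,1), let D̂ be a real d×d diagonal matrix with diagonal entries in [μ, G_d], let α be real with 0 < α ≤ μ/(2·G_d²), set ρ = 1 − α·μ, and for an integer k ≥ 1 define Γ = (I − (I − α·D̂)^{k+1})·D̂^{−1}. Then for every vector g ∈ ℝ^d, (1/(1 − β₁^k))·⟨g, Γ·g⟩ ≥ ((1 − ρ)/G_d)·‖g‖². -/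
open scoped RealInnerProductSpace

/-- Per-step main descent bound:
`(1/(1-β₁^k))·⟨g, Γ·g⟩ ≥ ((1-ρ)/G_d)·‖g‖²` for `Γ = (I - (I - α·D̂)^{k+1})·D̂⁻¹`
and `ρ = 1 - α·μ`. -/
theorem stmt13 (d : ℕ) (hd : 1 ≤ d) (μ Gd : ℝ) (hμ : 0 < μ) (hμG : μ ≤ Gd)
    (β₁ : ℝ) (hβ₁ : β₁ ∈ Set.Ico (0 : ℝ) 1)
    (Dh : Matrix (Fin d) (Fin d) ℝ) (hDdiag : Dh.IsDiag)
    (hDbound : ∀ i, Dh i i ∈ Set.Icc μ Gd)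
    (α : ℝ) (hα : 0 < α) (hα2 : α ≤ μ / (2 * Gd ^ 2))
    (ρ : ℝ) (hρ : ρ = 1 - α * μ)
    (k : ℕ) (hk : 1 ≤ k)
    (Γ : Matrix (Fin d) (Fin d) ℝ)
    (hΓ : Γ = (1 - (1 - α • Dh) ^ (k + 1)) * Dh⁻¹) :
    ∀ g : EuclideanSpace ℝ (Fin d),
      ((1 - ρ) / Gd) * ‖g‖ ^ 2 ≤ (1 / (1 - β₁ ^ k)) * ⟪g, mulV Γ g⟫ := by
  intro g
  have hGd : 0 < Gd := lt_of_lt_of_le hμ hμG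
  set D : Fin d → ℝ := fun i => Dh i i with hD
  have hDh : Dh = Matrix.diagonal D := by
    ext i j
    by_cases h : i = j
    · subst h; simp [Matrix.diagonal, D]
    · simp [Matrix.diagonal, h, hDdiag h]
  set γ : Fin d → ℝ := fun i => (1 - (1 - α * D i) ^ (k + 1)) * (D i)⁻¹ with hγ
  have hΓd : Γ = Matrix.diagonal γ := by
    have hDne : ∀ i, D i ≠ 0 := fun i => ne_of_gt (lt_of_lt_of_le hμ (hDbound i).1)
    have hinvD : Dh⁻¹ = Matrix.diagonal (fun i => (D i)⁻¹) := by
      apply Matrix.inv_eq_right_inv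
      rw [hDh, Matrix.diagonal_mul_diagonal]
      rw [show (fun i => D i * (D i)⁻¹) = fun _ => (1:ℝ) from
        funext fun i => mul_inv_cancel₀ (hDne i)]
      exact Matrix.diagonal_one
    rw [hΓ, hinvD, hDh]
    have h1 : (1 : Matrix (Fin d) (Fin d) ℝ) - α • Matrix.diagonal D
        = Matrix.diagonal (fun i => 1 - α * D i) := by
      ext i j
      by_cases h : i = j
      · subst h; simp [Matrix.one_apply, Matrix.diagonal_apply]
      · simp [Matrix.one_apply, Matrix.diagonal_apply, h]
    rw [h1, Matrix.diagonal_pow]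
    have hfp : ((fun i => 1 - α * D i) ^ (k + 1)) = fun i => (1 - α * D i) ^ (k + 1) := by
      funext i; simp [Pi.pow_apply]
    rw [hfp]
    have h2 : (1 : Matrix (Fin d) (Fin d) ℝ)
        - Matrix.diagonal (fun i => (1 - α * D i) ^ (k + 1))
        = Matrix.diagonal (fun i => 1 - (1 - α * D i) ^ (k + 1)) := by
      ext i j
      by_cases h : i = j
      · subst h; simp [Matrix.one_apply, Matrix.diagonal_apply]
      · simp [Matrix.one_apply, Matrix.diagonal_apply, h]
    rw [h2, Matrix.diagonal_mul_diagonal]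
  -- key pointwise bound
  have hγlb : ∀ i, (1 - ρ) / Gd ≤ γ i := by
    intro i
    obtain ⟨hμi, hiG⟩ := hDbound i
    have hDi : 0 < D i := lt_of_lt_of_le hμ hμi
    have hαD1 : α * D i ≤ 1 := by
      have h1 : α * D i ≤ (μ / (2 * Gd ^ 2)) * Gd := by
        apply mul_le_mul hα2 hiG (le_of_lt hDi) (le_of_lt (by positivity))
      have h2 : (μ / (2 * Gd ^ 2)) * Gd = μ / (2 * Gd) := by
        field_simp
      have h3 : μ / (2 * Gd) ≤ 1 := by
        rw [div_le_one (by positivity)]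
        nlinarith
      linarith
    have h0 : 0 ≤ 1 - α * D i := by linarith
    have h1 : 1 - α * D i ≤ 1 := by nlinarith
    have hpow : (1 - α * D i) ^ (k + 1) ≤ 1 - α * D i :=
      pow_le_of_le_one h0 h1 (by omega)
    have hnum : α * μ ≤ 1 - (1 - α * D i) ^ (k + 1) := by nlinarith
    have hinv : Gd⁻¹ ≤ (D i)⁻¹ := by
      apply inv_anti₀ hDi hiG
    calc (1 - ρ) / Gd = (α * μ) * Gd⁻¹ := by rw [hρ]; ring
      _ ≤ (1 - (1 - α * D i) ^ (k + 1)) * (D i)⁻¹ := by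
          apply mul_le_mul hnum hinv (by positivity) (by nlinarith)
      _ = γ i := rfl
  have happ : ∀ i, mulV Γ g i = γ i * g i := by
    intro i
    show (Γ.mulVec (fun j => g j)) i = γ i * g i
    rw [hΓd, Matrix.mulVec_diagonal]
  have hinner : ⟪g, mulV Γ g⟫ = ∑ i, γ i * (g i) ^ 2 := by
    rw [PiLp.inner_apply]
    apply Finset.sum_congr rfl
    intro i _
    rw [happ i]
    simp [RCLike.inner_apply]
    ring
  have hnorm : ‖g‖ ^ 2 = ∑ i, (g i) ^ 2 := by
    rw [← real_inner_self_eq_norm_sq, PiLp.inner_apply]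
    apply Finset.sum_congr rfl
    intro i _
    simp [RCLike.inner_apply]
  have hS : ((1 - ρ) / Gd) * ‖g‖ ^ 2 ≤ ⟪g, mulV Γ g⟫ := by
    rw [hinner, hnorm, Finset.mul_sum]
    apply Finset.sum_le_sum
    intro i _
    exact mul_le_mul_of_nonneg_right (hγlb i) (sq_nonneg _)
  have hS0 : 0 ≤ ⟪g, mulV Γ g⟫ := by
    refine le_trans ?_ hS
    have h0 : 0 ≤ (1 - ρ) / Gd := by
      rw [hρ, show (1 - (1 - α * μ)) = α * μ by ring]; positivity
    exact mul_nonneg h0 (sq_nonneg _)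
  have hβpow : β₁ ^ k < 1 := pow_lt_one₀ hβ₁.1 hβ₁.2 (by omega)
  have hβpow0 : 0 ≤ β₁ ^ k := pow_nonneg hβ₁.1 k
  have hfac : 1 ≤ 1 / (1 - β₁ ^ k) := by
    rw [le_div_iff₀ (by linarith)]; linarith
  calc ((1 - ρ) / Gd) * ‖g‖ ^ 2 ≤ ⟪g, mulV Γ g⟫ := hS
    _ = 1 * ⟪g, mulV Γ g⟫ := (one_mul _).symm
    _ ≤ (1 / (1 - β₁ ^ k)) * ⟪g, mulV Γ g⟫ := mul_le_mul_of_nonneg_right hfac hS0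
end
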